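/- For n = 5m−2 with integer m > 1, let Δ_{n,n-5} be the triangle v0v1v2 with three pendant paths at v2 of orders m, m−1, m−1, one pendant path at v1 of order m−1, and one at v0 of order m−1 (orders as equal as possible, the longer at v2), and let Ω_{n,n-5} be the square v0v1v2v3 with pendant paths of orders m−1, m, m, m at v0, v1, v2, v3 and an additional pendant path of order m at v2. Then N(Ω_{n,n-5}) − N(Δ_{n,n-5}) = m(m−2). -/

import Mathlib

open SimpleGraph

/-- Number of (nonempty) connected induced subgraphs of `G`. -/
noncomputable def numCIS {V : Type*} (G : SimpleGraph V) : ℕ :=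
  Nat.card {s : Finset V // s.Nonempty ∧ (G.induce (↑s : Set V)).Connected}

/-- Number of connected induced subgraphs of `G` containing the vertex `v`. -/
noncomputable def numCISat {V : Type*} (G : SimpleGraph V) (v : V) : ℕ :=
  Nat.card {s : Finset V // v ∈ s ∧ (G.induce (↑s : Set V)).Connected}

/-- Number of connected induced subgraphs of `G` containing both `u` and `v`. -/
noncomputable def numCISat2 {V : Type*} (G : SimpleGraph V) (u v : V) : ℕ :=
  Nat.card {s : Finset V // u ∈ s ∧ v ∈ s ∧ (G.induce (↑s : Set V)).Connected}

/-- The cycle `C_g` together with `k` pendant paths: the `i`-th pendant path has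
`len i` new vertices and is attached at the cycle vertex `att i`. -/
def cyclePendants (g k : ℕ) (att : Fin k → Fin g) (len : Fin k → ℕ) :
    SimpleGraph (Fin g ⊕ Σ i : Fin k, Fin (len i)) :=
  SimpleGraph.fromRel (fun a b =>
    (∃ x y : Fin g, a = Sum.inl x ∧ b = Sum.inl y ∧ ((x : ℕ) + 1) % g = (y : ℕ)) ∨
    (∃ (i : Fin k) (p q : Fin (len i)), a = Sum.inr ⟨i, p⟩ ∧ b = Sum.inr ⟨i, q⟩ ∧
      (p : ℕ) + 1 = (q : ℕ)) ∨
    (∃ (i : Fin k) (h : 0 < len i), a = Sum.inl (att i) ∧ b = Sum.inr ⟨i, ⟨0, h⟩⟩))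

section Adj

variable {g k : ℕ} {att : Fin k → Fin g} {len : Fin k → ℕ}

/-- adjacency on the cycle -/
def adjC (g : ℕ) (x y : Fin g) : Prop :=
  x ≠ y ∧ (((x : ℕ) + 1) % g = (y : ℕ) ∨ ((y : ℕ) + 1) % g = (x : ℕ))

instance (g : ℕ) (x y : Fin g) : Decidable (adjC g x y) := by unfold adjC; infer_instance

lemma adjC_symm {x y : Fin g} (h : adjC g x y) : adjC g y x := ⟨h.1.symm, h.2.symm⟩

lemma adj_inl_inl {x y : Fin g} :
    (cyclePendants g k att len).Adj (Sum.inl x) (Sum.inl y) ↔ adjC g x y := by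
  simp only [cyclePendants, fromRel_adj, adjC]
  constructor
  · rintro ⟨hne, h | h⟩
    · refine ⟨fun hxy => hne (by rw [hxy]), ?_⟩
      rcases h with (⟨x', y', hx, hy, he⟩ | ⟨_,_,_,h,_⟩ | ⟨_,_,_,h⟩) <;>
        first
        | (obtain rfl : x = x' := Sum.inl.inj hx; obtain rfl : y = y' := Sum.inl.inj hy
           exact Or.inl he)
        | exact absurd h (by simp)
    · refine ⟨fun hxy => hne (by rw [hxy]), ?_⟩
      rcases h with (⟨x', y', hx, hy, he⟩ | ⟨_,_,_,h,_⟩ | ⟨_,_,_,h⟩) <;>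
        first
        | (obtain rfl : y = x' := Sum.inl.inj hx; obtain rfl : x = y' := Sum.inl.inj hy
           exact Or.inr he)
        | exact absurd h (by simp)
  · rintro ⟨hne, h | h⟩
    · exact ⟨by simpa using hne, Or.inl (Or.inl ⟨x, y, rfl, rfl, h⟩)⟩
    · exact ⟨by simpa using hne, Or.inr (Or.inl ⟨y, x, rfl, rfl, h⟩)⟩

lemma adj_inl_inr {x : Fin g} {i : Fin k} {p : Fin (len i)} :
    (cyclePendants g k att len).Adj (Sum.inl x) (Sum.inr ⟨i, p⟩) ↔ x = att i ∧ (p : ℕ) = 0 := by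
  simp only [cyclePendants, fromRel_adj]
  constructor
  · rintro ⟨hne, h | h⟩
    · rcases h with (⟨_,_,_,h,_⟩ | ⟨_,_,_,h,_⟩ | ⟨j, hj, ha, hb⟩)
      · exact absurd h (by simp)
      · exact absurd h (by simp)
      · obtain rfl : x = att j := Sum.inl.inj ha
        obtain ⟨rfl, hpq⟩ := Sigma.mk.inj_iff.mp (Sum.inr.inj hb)
        exact ⟨rfl, by simp [eq_of_heq hpq]⟩
    · rcases h with (⟨_,_,h,_⟩ | ⟨_,_,_,_,h,_⟩ | ⟨_,_,h,_⟩) <;> exact absurd h (by simp)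
  · rintro ⟨rfl, hp⟩
    have hlen : 0 < len i := lt_of_le_of_lt (Nat.zero_le _) p.2
    have : p = ⟨0, hlen⟩ := Fin.ext hp
    subst this
    exact ⟨by simp, Or.inl (Or.inr (Or.inr ⟨i, hlen, rfl, rfl⟩))⟩

lemma adj_inr_inr {i j : Fin k} {p : Fin (len i)} {q : Fin (len j)} :
    (cyclePendants g k att len).Adj (Sum.inr ⟨i, p⟩) (Sum.inr ⟨j, q⟩) ↔
      i = j ∧ ((p : ℕ) + 1 = (q : ℕ) ∨ (q : ℕ) + 1 = (p : ℕ)) := by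
  simp only [cyclePendants, fromRel_adj]
  constructor
  · rintro ⟨hne, h | h⟩
    · rcases h with (⟨_,_,h,_⟩ | ⟨i', p', q', ha, hb, he⟩ | ⟨_,_,h,_⟩)
      · exact absurd h (by simp)
      · obtain ⟨rfl, hp⟩ := Sigma.mk.inj_iff.mp (Sum.inr.inj ha)
        obtain ⟨rfl, hq⟩ := Sigma.mk.inj_iff.mp (Sum.inr.inj hb)
        obtain rfl := eq_of_heq hp; obtain rfl := eq_of_heq hq
        exact ⟨rfl, Or.inl he⟩
      · exact absurd h (by simp)
    · rcases h with (⟨_,_,h,_⟩ | ⟨i', p', q', ha, hb, he⟩ | ⟨_,_,h,_⟩)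
      · exact absurd h (by simp)
      · obtain ⟨rfl, hp⟩ := Sigma.mk.inj_iff.mp (Sum.inr.inj ha)
        obtain ⟨rfl, hq⟩ := Sigma.mk.inj_iff.mp (Sum.inr.inj hb)
        obtain rfl := eq_of_heq hp; obtain rfl := eq_of_heq hq
        exact ⟨rfl, Or.inr he⟩
      · exact absurd h (by simp)
  · rintro ⟨rfl, h | h⟩
    · refine ⟨?_, Or.inl (Or.inr (Or.inl ⟨i, p, q, rfl, rfl, h⟩))⟩
      simp only [ne_eq, Sum.inr.injEq, Sigma.mk.inj_iff, heq_eq_eq, true_and]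
      intro hpq; subst hpq; omega
    · refine ⟨?_, Or.inr (Or.inr (Or.inl ⟨i, q, p, rfl, rfl, h⟩))⟩
      simp only [ne_eq, Sum.inr.injEq, Sigma.mk.inj_iff, heq_eq_eq, true_and]
      intro hpq; subst hpq; omega

lemma adj_inr_inl {x : Fin g} {i : Fin k} {p : Fin (len i)} :
    (cyclePendants g k att len).Adj (Sum.inr ⟨i, p⟩) (Sum.inl x) ↔ x = att i ∧ (p : ℕ) = 0 := by
  rw [adj_comm]; exact adj_inl_inr

end Adj

section S2
variable {g : ℕ}

def splitProp (C : Finset (Fin g)) : Prop :=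
  ∀ A ⊆ C, A.Nonempty → (C \ A).Nonempty → ∃ a ∈ A, ∃ b ∈ C \ A, adjC g a b

def goodC (C : Finset (Fin g)) : Prop := C.Nonempty ∧ splitProp C

instance (C : Finset (Fin g)) : Decidable (splitProp C) := by
  unfold splitProp; infer_instance

instance (C : Finset (Fin g)) : Decidable (goodC C) := by
  unfold goodC; infer_instance

/-- connectivity within `C` from the split property -/
lemma conn_of_split {C : Finset (Fin g)} (hC : splitProp C) {x y : Fin g}
    (hx : x ∈ C) (hy : y ∈ C) :
    Relation.ReflTransGen (fun a b => a ∈ C ∧ b ∈ C ∧ adjC g a b) x y := by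
  classical
  by_contra hnot
  set A : Finset (Fin g) :=
    C.filter (fun z => Relation.ReflTransGen (fun a b => a ∈ C ∧ b ∈ C ∧ adjC g a b) x z) with hA
  have hxA : x ∈ A := by simp [hA, hx, Relation.ReflTransGen.refl]
  have hyA : y ∉ A := by simp [hA, hy, hnot]
  have hsub : A ⊆ C := Finset.filter_subset _ _
  have hCA : (C \ A).Nonempty := ⟨y, Finset.mem_sdiff.mpr ⟨hy, hyA⟩⟩
  obtain ⟨a, ha, b, hb, hadj⟩ := hC A hsub ⟨x, hxA⟩ hCA
  rw [Finset.mem_sdiff] at hb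
  have : b ∈ A := by
    rw [hA, Finset.mem_filter] at ha ⊢
    exact ⟨hb.1, ha.2.trans (Relation.ReflTransGen.single ⟨ha.1, hb.1, hadj⟩)⟩
  exact hb.2 this

/-- boundary crossing lemma -/
lemma exists_boundary {V : Type*} {G : SimpleGraph V} {s : Set V}
    (T : Set V) : ∀ {u v : s}, (G.induce s).Walk u v → (u : V) ∈ T → (v : V) ∉ T →
    ∃ a b, a ∈ s ∧ b ∈ s ∧ a ∈ T ∧ b ∉ T ∧ G.Adj a b := by
  intro u v w
  induction w with
  | nil => intro h1 h2; exact absurd h1 h2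
  | @cons a c v hadj p ih =>
    intro h1 h2
    by_cases hc : (c : V) ∈ T
    · exact ih hc h2
    · exact ⟨a, c, a.2, c.2, h1, hc, hadj⟩

lemma reachable_of_adj_mem {V : Type*} {G : SimpleGraph V} {s : Set V} {a b : V}
    (ha : a ∈ s) (hb : b ∈ s) (h : G.Adj a b) :
    (G.induce s).Reachable ⟨a, ha⟩ ⟨b, hb⟩ :=
  SimpleGraph.Adj.reachable (by simpa using h)

end S2

section S3
open Classical in
/-- the cycle part of `s` -/
noncomputable def sC {g k : ℕ} {len : Fin k → ℕ} (s : Finset (Fin g ⊕ Σ i : Fin k, Fin (len i))) :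
    Finset (Fin g) := Finset.univ.filter (fun x => Sum.inl x ∈ s)

open Classical in
noncomputable def arcSet {g k : ℕ} {len : Fin k → ℕ} (C : Finset (Fin g)) (c : Fin k → ℕ) :
    Finset (Fin g ⊕ Σ i : Fin k, Fin (len i)) :=
  Finset.univ.filter (fun v => match v with
    | Sum.inl x => x ∈ C
    | Sum.inr ⟨i, p⟩ => (p : ℕ) < c i)

open Classical in
noncomputable def intervalSet {g k : ℕ} {len : Fin k → ℕ} (i : Fin k) (a b : ℕ) :
    Finset (Fin g ⊕ Σ i : Fin k, Fin (len i)) :=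
  Finset.univ.filter (fun v => ∃ p : Fin (len i), v = Sum.inr ⟨i, p⟩ ∧ a ≤ (p : ℕ) ∧ (p : ℕ) ≤ b)

variable {g k : ℕ} {att : Fin k → Fin g} {len : Fin k → ℕ}

lemma mem_sC {s : Finset (Fin g ⊕ Σ i : Fin k, Fin (len i))} {x : Fin g} :
    x ∈ sC s ↔ Sum.inl x ∈ s := by simp [sC]

lemma mem_arcSet_inl {C : Finset (Fin g)} {c : Fin k → ℕ} {x : Fin g} :
    (Sum.inl x : Fin g ⊕ Σ i : Fin k, Fin (len i)) ∈ arcSet C c ↔ x ∈ C := by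
  simp [arcSet]

lemma mem_arcSet_inr {C : Finset (Fin g)} {c : Fin k → ℕ} {i : Fin k} {p : Fin (len i)} :
    (Sum.inr ⟨i, p⟩ : Fin g ⊕ Σ i : Fin k, Fin (len i)) ∈ arcSet C c ↔ (p : ℕ) < c i := by
  simp [arcSet]

lemma mem_intervalSet_inl {i : Fin k} {a b : ℕ} {x : Fin g} :
    (Sum.inl x : Fin g ⊕ Σ i : Fin k, Fin (len i)) ∈ intervalSet i a b ↔ False := by
  simp [intervalSet]

lemma mem_intervalSet_inr {i j : Fin k} {a b : ℕ} {q : Fin (len j)} :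
    (Sum.inr ⟨j, q⟩ : Fin g ⊕ Σ i : Fin k, Fin (len i)) ∈ intervalSet i a b ↔
      j = i ∧ a ≤ (q : ℕ) ∧ (q : ℕ) ≤ b := by
  simp only [intervalSet, Finset.mem_filter, Finset.mem_univ, true_and]
  constructor
  · rintro ⟨p, heq, h1, h2⟩
    obtain ⟨rfl, hpq⟩ := Sigma.mk.inj_iff.mp (Sum.inr.inj heq)
    obtain rfl := eq_of_heq hpq
    exact ⟨rfl, h1, h2⟩
  · rintro ⟨rfl, h1, h2⟩
    exact ⟨q, rfl, h1, h2⟩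

end S3
section Forward
variable {g k : ℕ} {att : Fin k → Fin g} {len : Fin k → ℕ}
  {s : Finset (Fin g ⊕ Σ i : Fin k, Fin (len i))}

lemma crossing (hconn : ((cyclePendants g k att len).induce ↑s).Connected)
    (T : Set (Fin g ⊕ Σ i : Fin k, Fin (len i))) {u v}
    (hu : u ∈ s) (hut : u ∈ T) (hv : v ∈ s) (hvt : v ∉ T) :
    ∃ a b, a ∈ s ∧ b ∈ s ∧ a ∈ T ∧ b ∉ T ∧ (cyclePendants g k att len).Adj a b := by
  obtain ⟨w⟩ := hconn.preconnected ⟨u, by simpa using hu⟩ ⟨v, by simpa using hv⟩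
  obtain ⟨a, b, ha, hb, h1, h2, h3⟩ := exists_boundary T w hut hvt
  exact ⟨a, b, by simpa using ha, by simpa using hb, h1, h2, h3⟩

lemma prefix_step (hconn : ((cyclePendants g k att len).induce ↑s).Connected)
    {x0 : Fin g} (hx0 : Sum.inl x0 ∈ s) {i : Fin k} {p : Fin (len i)}
    (hp : Sum.inr ⟨i, p⟩ ∈ s) :
    ((p : ℕ) = 0 ∧ Sum.inl (att i) ∈ s) ∨
      (∃ q : Fin (len i), (q : ℕ) + 1 = (p : ℕ) ∧ Sum.inr ⟨i, q⟩ ∈ s) := by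
  set T : Set (Fin g ⊕ Σ i : Fin k, Fin (len i)) :=
    {v | ∃ r : Fin (len i), v = Sum.inr ⟨i, r⟩ ∧ (p : ℕ) ≤ (r : ℕ)} with hT
  have hvT : (Sum.inl x0 : Fin g ⊕ Σ i : Fin k, Fin (len i)) ∉ T := by
    rintro ⟨r, hr, -⟩; exact absurd hr (by simp)
  obtain ⟨a, b, has, hbs, haT, hbT, hadj⟩ :=
    crossing hconn T hp ⟨p, rfl, le_rfl⟩ hx0 hvT
  obtain ⟨r, rfl, hrp⟩ := haT
  cases b with
  | inl y =>
    obtain ⟨rfl, hr0⟩ := adj_inr_inl.mp hadj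
    exact Or.inl ⟨by omega, hbs⟩
  | inr z =>
    obtain ⟨j, q⟩ := z
    obtain ⟨rfl, hval⟩ := adj_inr_inr.mp hadj
    have hqlt : (q : ℕ) < (p : ℕ) := by
      by_contra hqp
      exact hbT ⟨q, rfl, by omega⟩
    rcases hval with h | h
    · omega
    · exact Or.inr ⟨q, by omega, hbs⟩

lemma prefix_lemma (hconn : ((cyclePendants g k att len).induce ↑s).Connected)
    {x0 : Fin g} (hx0 : Sum.inl x0 ∈ s) {i : Fin k} :
    ∀ (p : Fin (len i)), Sum.inr ⟨i, p⟩ ∈ s →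
      Sum.inl (att i) ∈ s ∧ ∀ q : Fin (len i), (q : ℕ) ≤ (p : ℕ) → Sum.inr ⟨i, q⟩ ∈ s := by
  suffices H : ∀ n (p : Fin (len i)), (p : ℕ) ≤ n → Sum.inr ⟨i, p⟩ ∈ s →
      Sum.inl (att i) ∈ s ∧ ∀ q : Fin (len i), (q : ℕ) ≤ (p : ℕ) → Sum.inr ⟨i, q⟩ ∈ s by
    exact fun p hp => H (p : ℕ) p le_rfl hp
  intro n
  induction n with
  | zero =>
    intro p hp0 hp
    rcases prefix_step hconn hx0 hp with ⟨hp0', hatt⟩ | ⟨q, hq, -⟩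
    · exact ⟨hatt, fun q hq' => by have hqp : q = p := Fin.ext (by omega); rwa [hqp]⟩
    · omega
  | succ n ih =>
    intro p hpn hp
    by_cases hle : (p : ℕ) ≤ n
    · exact ih p hle hp
    · rcases prefix_step hconn hx0 hp with ⟨hp0', hatt⟩ | ⟨q, hq, hqs⟩
      · exact ⟨hatt, fun q hq' => by have hqp : q = p := Fin.ext (by omega); rwa [hqp]⟩
      · obtain ⟨hatt, hall⟩ := ih q (by omega) hqs
        refine ⟨hatt, fun q' hq' => ?_⟩
        by_cases h2 : (q' : ℕ) ≤ (q : ℕ)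
        · exact hall q' h2
        · have hqp : q' = p := Fin.ext (by omega); rwa [hqp]

lemma splitProp_sC (hconn : ((cyclePendants g k att len).induce ↑s).Connected)
    {x0 : Fin g} (hx0 : Sum.inl x0 ∈ s) : splitProp (sC s) := by
  intro A hsub hAne hCAne
  obtain ⟨a0, ha0⟩ := hAne
  obtain ⟨b0, hb0⟩ := hCAne
  rw [Finset.mem_sdiff] at hb0
  set T : Set (Fin g ⊕ Σ i : Fin k, Fin (len i)) :=
    {v | (∃ x ∈ A, v = Sum.inl x) ∨
      (∃ (i : Fin k) (p : Fin (len i)), v = Sum.inr ⟨i, p⟩ ∧ att i ∈ A)} with hT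
  have ha0s : Sum.inl a0 ∈ s := mem_sC.mp (hsub ha0)
  have hb0s : Sum.inl b0 ∈ s := mem_sC.mp hb0.1
  have hb0T : (Sum.inl b0 : Fin g ⊕ Σ i : Fin k, Fin (len i)) ∉ T := by
    rintro (⟨x, hx, hxe⟩ | ⟨i, p, hpe, -⟩)
    · obtain rfl := Sum.inl.inj hxe; exact hb0.2 hx
    · exact absurd hpe (by simp)
  obtain ⟨a, b, has, hbs, haT, hbT, hadj⟩ :=
    crossing hconn T ha0s (Or.inl ⟨a0, ha0, rfl⟩) hb0s hb0T
  rcases haT with ⟨x, hxA, rfl⟩ | ⟨i, p, rfl, hattA⟩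
  · cases b with
    | inl y =>
      have hxy := adj_inl_inl.mp hadj
      refine ⟨x, hxA, y, Finset.mem_sdiff.mpr ⟨mem_sC.mpr hbs, ?_⟩, hxy⟩
      intro hyA; exact hbT (Or.inl ⟨y, hyA, rfl⟩)
    | inr z =>
      obtain ⟨i, p⟩ := z
      obtain ⟨rfl, hp0⟩ := adj_inl_inr.mp hadj
      exact absurd (Or.inr ⟨i, p, rfl, hxA⟩) hbT
  · cases b with
    | inl y =>
      obtain ⟨rfl, hp0⟩ := adj_inr_inl.mp hadj
      exact absurd (Or.inl ⟨att i, hattA, rfl⟩) hbT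
    | inr z =>
      obtain ⟨j, q⟩ := z
      obtain ⟨rfl, -⟩ := adj_inr_inr.mp hadj
      exact absurd (Or.inr ⟨i, q, rfl, hattA⟩) hbT

lemma same_path (hconn : ((cyclePendants g k att len).induce ↑s).Connected)
    (hnoinl : ∀ x : Fin g, Sum.inl x ∉ s) {i0 : Fin k} {p0 : Fin (len i0)}
    (hp0 : Sum.inr ⟨i0, p0⟩ ∈ s) :
    ∀ (j : Fin k) (q : Fin (len j)), Sum.inr ⟨j, q⟩ ∈ s → j = i0 := by
  intro j q hq
  by_contra hji
  set T : Set (Fin g ⊕ Σ i : Fin k, Fin (len i)) :=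
    {v | ∃ t : Fin (len i0), v = Sum.inr ⟨i0, t⟩} with hT
  have hqT : (Sum.inr ⟨j, q⟩ : Fin g ⊕ Σ i : Fin k, Fin (len i)) ∉ T := by
    rintro ⟨t, ht⟩
    obtain ⟨h1, -⟩ := Sigma.mk.inj_iff.mp (Sum.inr.inj ht)
    exact hji h1
  obtain ⟨a, b, has, hbs, haT, hbT, hadj⟩ := crossing hconn T hp0 ⟨p0, rfl⟩ hq hqT
  obtain ⟨t, rfl⟩ := haT
  cases b with
  | inl y => exact hnoinl y hbs
  | inr z =>
    obtain ⟨j', q'⟩ := z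
    obtain ⟨rfl, -⟩ := adj_inr_inr.mp hadj
    exact hbT ⟨q', rfl⟩

lemma between (hconn : ((cyclePendants g k att len).induce ↑s).Connected)
    (hnoinl : ∀ x : Fin g, Sum.inl x ∉ s) {i0 : Fin k} :
    ∀ (p q r : Fin (len i0)), Sum.inr ⟨i0, p⟩ ∈ s → Sum.inr ⟨i0, q⟩ ∈ s →
      (p : ℕ) ≤ (r : ℕ) → (r : ℕ) ≤ (q : ℕ) → Sum.inr ⟨i0, r⟩ ∈ s := by
  intro p q r hps hqs hpr hrq
  by_cases hrp : (r : ℕ) = (p : ℕ)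
  · have h : r = p := Fin.ext hrp; rwa [h]
  have hlt : (p : ℕ) < (r : ℕ) := by omega
  set T : Set (Fin g ⊕ Σ i : Fin k, Fin (len i)) :=
    {v | ∃ t : Fin (len i0), v = Sum.inr ⟨i0, t⟩ ∧ (r : ℕ) ≤ (t : ℕ)} with hT
  have hv : (Sum.inr ⟨i0, p⟩ : Fin g ⊕ Σ i : Fin k, Fin (len i)) ∉ T := by
    rintro ⟨t, ht, htr⟩
    obtain ⟨-, h2⟩ := Sigma.mk.inj_iff.mp (Sum.inr.inj ht)
    obtain rfl := eq_of_heq h2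
    omega
  obtain ⟨a, b, has, hbs, haT, hbT, hadj⟩ :=
    crossing hconn T hqs ⟨q, rfl, hrq⟩ hps hv
  obtain ⟨t, rfl, htr⟩ := haT
  cases b with
  | inl y => exact absurd hbs (hnoinl y)
  | inr z =>
    obtain ⟨j', q'⟩ := z
    obtain ⟨rfl, hval⟩ := adj_inr_inr.mp hadj
    have hq' : (q' : ℕ) < (r : ℕ) := by
      by_contra hc
      exact hbT ⟨q', rfl, by omega⟩
    have ht : t = r := Fin.ext (by omega)
    rwa [ht] at has

end Forward
section Assemble
variable {g k : ℕ} {att : Fin k → Fin g} {len : Fin k → ℕ}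
  {s : Finset (Fin g ⊕ Σ i : Fin k, Fin (len i))}

open Classical in
/-- prefix length of `s` along the `i`-th pendant path -/
noncomputable def pc (s : Finset (Fin g ⊕ Σ i : Fin k, Fin (len i))) (i : Fin k) : ℕ :=
  (Finset.univ.filter (fun p : Fin (len i) => Sum.inr ⟨i, p⟩ ∈ s)).sup (fun p => (p : ℕ) + 1)

lemma pc_le (i : Fin k) : pc s i ≤ len i :=
  Finset.sup_le (fun p _ => p.isLt)

lemma mem_iff_lt_pc (hconn : ((cyclePendants g k att len).induce ↑s).Connected)
    {x0 : Fin g} (hx0 : Sum.inl x0 ∈ s) {i : Fin k} (p : Fin (len i)) :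
    Sum.inr ⟨i, p⟩ ∈ s ↔ (p : ℕ) < pc s i := by
  classical
  constructor
  · intro hp
    exact Nat.lt_of_lt_of_le (Nat.lt_succ_self _)
      (Finset.le_sup (f := fun p : Fin (len i) => (p : ℕ) + 1) (by simp [hp]))
  · intro hlt
    obtain ⟨q, hq, hpq⟩ := (Finset.le_sup_iff (by omega : (0:ℕ) < (p:ℕ) + 1)).mp hlt
    simp only [Finset.mem_filter, Finset.mem_univ, true_and] at hq
    exact (prefix_lemma hconn hx0 q hq).2 p (by omega)

lemma pc_pos_att (hconn : ((cyclePendants g k att len).induce ↑s).Connected)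
    {x0 : Fin g} (hx0 : Sum.inl x0 ∈ s) {i : Fin k} (h : 0 < pc s i) : att i ∈ sC s := by
  classical
  obtain ⟨q, hq, -⟩ := (Finset.le_sup_iff (by omega : (0:ℕ) < 1)).mp h
  simp only [Finset.mem_filter, Finset.mem_univ, true_and] at hq
  exact mem_sC.mpr (prefix_lemma hconn hx0 q hq).1

lemma caseB (hconn : ((cyclePendants g k att len).induce ↑s).Connected)
    {x0 : Fin g} (hx0 : Sum.inl x0 ∈ s) :
    goodC (sC s) ∧ (∀ i, pc s i ≤ len i) ∧ (∀ i, 0 < pc s i → att i ∈ sC s) ∧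
      s = arcSet (sC s) (pc s) := by
  refine ⟨⟨⟨x0, mem_sC.mpr hx0⟩, splitProp_sC hconn hx0⟩, fun i => pc_le i,
    fun i h => pc_pos_att hconn hx0 h, ?_⟩
  ext v
  cases v with
  | inl x => rw [mem_arcSet_inl, mem_sC]
  | inr z =>
    obtain ⟨i, p⟩ := z
    rw [mem_arcSet_inr, mem_iff_lt_pc hconn hx0]

lemma caseA (hconn : ((cyclePendants g k att len).induce ↑s).Connected)
    (hnoinl : ∀ x : Fin g, Sum.inl x ∉ s) (hne : s.Nonempty) :
    ∃ i a b, a ≤ b ∧ b < len i ∧ s = intervalSet i a b := by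
  classical
  obtain ⟨v0, hv0⟩ := hne
  cases v0 with
  | inl x => exact absurd hv0 (hnoinl x)
  | inr z =>
    obtain ⟨i0, p0⟩ := z
    set D : Finset (Fin (len i0)) :=
      Finset.univ.filter (fun p : Fin (len i0) => Sum.inr ⟨i0, p⟩ ∈ s) with hD
    have hDne : D.Nonempty := ⟨p0, by simp [hD, hv0]⟩
    have hmemD : ∀ p : Fin (len i0), p ∈ D ↔ Sum.inr ⟨i0, p⟩ ∈ s := by
      intro p; simp [hD]
    refine ⟨i0, (D.min' hDne : ℕ), (D.max' hDne : ℕ),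
      Fin.le_def.mp (D.min'_le _ (D.max'_mem hDne)), (D.max' hDne).isLt, ?_⟩
    ext v
    cases v with
    | inl x => simp only [mem_intervalSet_inl, iff_false]; exact hnoinl x
    | inr z =>
      obtain ⟨j, q⟩ := z
      constructor
      · intro hq
        obtain rfl := same_path hconn hnoinl hv0 j q hq
        exact mem_intervalSet_inr.mpr ⟨rfl,
          Fin.le_def.mp (D.min'_le q ((hmemD q).mpr hq)),
          Fin.le_def.mp (D.le_max' q ((hmemD q).mpr hq))⟩
      · intro hq
        obtain ⟨rfl, h1, h2⟩ := mem_intervalSet_inr.mp hq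
        exact between hconn hnoinl (D.min' hDne) (D.max' hDne) q
          ((hmemD _).mp (D.min'_mem hDne)) ((hmemD _).mp (D.max'_mem hDne)) h1 h2

end Assemble

section Backward
variable {g k : ℕ} {att : Fin k → Fin g} {len : Fin k → ℕ}

lemma conn_intervalSet {i : Fin k} {a b : ℕ} (hab : a ≤ b) (hblt : b < len i) :
    (intervalSet (g := g) i a b : Finset (Fin g ⊕ Σ i : Fin k, Fin (len i))).Nonempty ∧
      ((cyclePendants g k att len).induce ↑(intervalSet (g := g) (len := len) i a b)).Connected := by
  have ha : (Sum.inr ⟨i, ⟨a, lt_of_le_of_lt hab hblt⟩⟩ : Fin g ⊕ Σ i : Fin k, Fin (len i)) ∈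
      intervalSet i a b := mem_intervalSet_inr.mpr ⟨rfl, le_rfl, hab⟩
  refine ⟨⟨_, ha⟩, ?_⟩
  rw [connected_iff]
  refine ⟨?_, ⟨⟨_, by simpa using ha⟩⟩⟩
  have key : ∀ t (hta : a ≤ t) (htb : t ≤ b),
      ((cyclePendants g k att len).induce ↑(intervalSet (g := g) (len := len) i a b)).Reachable
        ⟨_, by simpa using ha⟩
        ⟨Sum.inr ⟨i, ⟨t, lt_of_le_of_lt htb hblt⟩⟩,
          Finset.mem_coe.mpr (mem_intervalSet_inr.mpr ⟨rfl, hta, htb⟩)⟩ := by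
    intro t hta
    induction t, hta using Nat.le_induction with
    | base => intro _; exact Reachable.refl _
    | succ t ht ih =>
      intro htb
      refine (ih (by omega)).trans (reachable_of_adj_mem ?_ ?_ ?_)
      · exact Finset.mem_coe.mpr (mem_intervalSet_inr.mpr
          ⟨rfl, (by exact ht), (by exact Nat.le_of_succ_le htb)⟩)
      · exact Finset.mem_coe.mpr (mem_intervalSet_inr.mpr
          ⟨rfl, (by exact Nat.le_succ_of_le ht), (by exact htb)⟩)
      · exact adj_inr_inr.mpr ⟨rfl, Or.inl rfl⟩
  have reach : ∀ v : ↑(↑(intervalSet (g := g) (len := len) i a b) : Set (Fin g ⊕ Σ i : Fin k, Fin (len i))),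
      ((cyclePendants g k att len).induce ↑(intervalSet (g := g) (len := len) i a b)).Reachable
        ⟨_, by simpa using ha⟩ v := by
    rintro ⟨v, hv⟩
    cases v with
    | inl x => exact absurd (Finset.mem_coe.mp hv) (by simp [mem_intervalSet_inl])
    | inr z =>
      obtain ⟨j, q⟩ := z
      obtain ⟨rfl, h1, h2⟩ := mem_intervalSet_inr.mp (Finset.mem_coe.mp hv)
      exact key (q : ℕ) h1 h2
  exact fun u v => (reach u).symm.trans (reach v)

lemma conn_arcSet {C : Finset (Fin g)} {c : Fin k → ℕ} (hC : goodC C)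
    (hlen : ∀ i, c i ≤ len i) (hatt : ∀ i, 0 < c i → att i ∈ C) :
    (arcSet (len := len) C c).Nonempty ∧
      ((cyclePendants g k att len).induce ↑(arcSet (g := g) (len := len) C c)).Connected := by
  obtain ⟨x0, hx0⟩ := hC.1
  have hx0m : (Sum.inl x0 : Fin g ⊕ Σ i : Fin k, Fin (len i)) ∈ arcSet C c :=
    mem_arcSet_inl.mpr hx0
  refine ⟨⟨_, hx0m⟩, ?_⟩
  rw [connected_iff]
  refine ⟨?_, ⟨⟨_, by simpa using hx0m⟩⟩⟩
  have reach_inl : ∀ y, Relation.ReflTransGen (fun a b => a ∈ C ∧ b ∈ C ∧ adjC g a b) x0 y →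
      ∃ hy : y ∈ C,
      ((cyclePendants g k att len).induce ↑(arcSet (g := g) (len := len) C c)).Reachable
        ⟨_, by simpa using hx0m⟩
        ⟨Sum.inl y, Finset.mem_coe.mpr (mem_arcSet_inl.mpr hy)⟩ := by
    intro y h
    induction h with
    | refl => exact ⟨hx0, Reachable.refl _⟩
    | tail hbc hstep ih =>
      obtain ⟨hb', rb⟩ := ih
      exact ⟨hstep.2.1, rb.trans (reachable_of_adj_mem
        (Finset.mem_coe.mpr (mem_arcSet_inl.mpr hstep.1))
        (Finset.mem_coe.mpr (mem_arcSet_inl.mpr hstep.2.1))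
        (adj_inl_inl.mpr hstep.2.2))⟩
  have reach_y : ∀ y (hy : y ∈ C),
      ((cyclePendants g k att len).induce ↑(arcSet (g := g) (len := len) C c)).Reachable
        ⟨_, by simpa using hx0m⟩
        ⟨Sum.inl y, Finset.mem_coe.mpr (mem_arcSet_inl.mpr hy)⟩ := by
    intro y hy
    obtain ⟨hy2, r⟩ := reach_inl y (conn_of_split hC.2 hx0 hy)
    exact r
  have climb : ∀ (i : Fin k) (t : ℕ) (ht : t < c i),
      ((cyclePendants g k att len).induce ↑(arcSet (g := g) (len := len) C c)).Reachable
        ⟨_, by simpa using hx0m⟩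
        ⟨Sum.inr ⟨i, ⟨t, lt_of_lt_of_le ht (hlen i)⟩⟩,
          Finset.mem_coe.mpr (mem_arcSet_inr.mpr (by exact ht))⟩ := by
    intro i t
    induction t with
    | zero =>
      intro ht
      refine (reach_y (att i) (hatt i ht)).trans (reachable_of_adj_mem
        (Finset.mem_coe.mpr (mem_arcSet_inl.mpr (hatt i ht)))
        (Finset.mem_coe.mpr (mem_arcSet_inr.mpr (by exact ht)))
        (adj_inl_inr.mpr ⟨rfl, rfl⟩))
    | succ t ih =>
      intro ht
      refine (ih (by omega)).trans (reachable_of_adj_mem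
        (Finset.mem_coe.mpr (mem_arcSet_inr.mpr (by exact Nat.lt_of_succ_lt ht)))
        (Finset.mem_coe.mpr (mem_arcSet_inr.mpr (by exact ht)))
        (adj_inr_inr.mpr ⟨rfl, Or.inl rfl⟩))
  have reach : ∀ v : ↑(↑(arcSet (g := g) (len := len) C c) : Set (Fin g ⊕ Σ i : Fin k, Fin (len i))),
      ((cyclePendants g k att len).induce ↑(arcSet (g := g) (len := len) C c)).Reachable
        ⟨_, by simpa using hx0m⟩ v := by
    rintro ⟨v, hv⟩
    cases v with
    | inl y => exact reach_y y (mem_arcSet_inl.mp (Finset.mem_coe.mp hv))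
    | inr z =>
      obtain ⟨i, p⟩ := z
      exact climb i (p : ℕ) (mem_arcSet_inr.mp (Finset.mem_coe.mp hv))
  exact fun u v => (reach u).symm.trans (reach v)

/-- Characterization of nonempty connected induced subgraphs of `cyclePendants`. -/
theorem conn_iff (s : Finset (Fin g ⊕ Σ i : Fin k, Fin (len i))) :
    (s.Nonempty ∧ ((cyclePendants g k att len).induce ↑s).Connected) ↔
      ((∃ i a b, a ≤ b ∧ b < len i ∧ s = intervalSet i a b) ∨
       (∃ (C : Finset (Fin g)) (c : Fin k → ℕ), goodC C ∧ (∀ i, c i ≤ len i) ∧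
         (∀ i, 0 < c i → att i ∈ C) ∧ s = arcSet C c)) := by
  constructor
  · rintro ⟨hne, hconn⟩
    by_cases hinl : ∃ x : Fin g, Sum.inl x ∈ s
    · obtain ⟨x0, hx0⟩ := hinl
      obtain ⟨h1, h2, h3, h4⟩ := caseB hconn hx0
      exact Or.inr ⟨sC s, pc s, h1, h2, h3, h4⟩
    · push_neg at hinl
      exact Or.inl (caseA hconn hinl hne)
  · rintro (⟨i, a, b, hab, hblt, rfl⟩ | ⟨C, c, hC, hlen, hatt, rfl⟩)
    · exact conn_intervalSet hab hblt
    · exact conn_arcSet hC hlen hatt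
end Backward
section Count
variable {g k : ℕ} (att : Fin k → Fin g) (len : Fin k → ℕ)

/-- interval codes -/
abbrev CodeI (k : ℕ) (len : Fin k → ℕ) := Σ i : Fin k, Σ b : Fin (len i), Fin ((b : ℕ) + 1)

/-- arc codes -/
abbrev CodeA (g k : ℕ) (att : Fin k → Fin g) (len : Fin k → ℕ) :=
  Σ C : {C : Finset (Fin g) // goodC C}, Π i : Fin k, Fin (if att i ∈ C.1 then len i + 1 else 1)

noncomputable def codeFun :
    CodeI k len ⊕ CodeA g k att len →
      {s : Finset (Fin g ⊕ Σ i : Fin k, Fin (len i)) //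
        s.Nonempty ∧ ((cyclePendants g k att len).induce ↑s).Connected}
  | Sum.inl ⟨i, b, a⟩ =>
      ⟨intervalSet i a b, (conn_iff _).mpr (Or.inl ⟨i, (a : ℕ), (b : ℕ),
        Nat.lt_succ_iff.mp a.isLt, b.isLt, rfl⟩)⟩
  | Sum.inr ⟨C, c⟩ =>
      ⟨arcSet C.1 (fun i => (c i : ℕ)), (conn_iff _).mpr (Or.inr ⟨C.1, fun i => (c i : ℕ),
        C.2, fun i => by
          have h1 : ((c i : ℕ)) < len i + 1 :=
            lt_of_lt_of_le (c i).isLt (by split_ifs <;> omega)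
          exact Nat.lt_succ_iff.mp h1,
        fun i hpos => by
          by_contra h
          have h1 : ((c i : ℕ)) < 1 := lt_of_lt_of_le (c i).isLt (le_of_eq (if_neg h))
          have h2 : 0 < ((c i : ℕ)) := hpos
          omega, rfl⟩)⟩

lemma codeFun_injective : Function.Injective (codeFun att len) := by
  intro x y hxy
  have hval := congrArg Subtype.val hxy
  match x, y with
  | Sum.inl ⟨i, b, a⟩, Sum.inl ⟨i', b', a'⟩ =>
    simp only [codeFun] at hval
    have hmem : ∀ (j : Fin k) (q : Fin (len j)),
        Sum.inr ⟨j, q⟩ ∈ (intervalSet (g := g) i (a : ℕ) (b : ℕ)) ↔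
        Sum.inr ⟨j, q⟩ ∈ (intervalSet (g := g) i' (a' : ℕ) (b' : ℕ)) := by
      intro j q; rw [hval]
    have hab : (a : ℕ) ≤ (b : ℕ) := Nat.lt_succ_iff.mp a.isLt
    have hab' : (a' : ℕ) ≤ (b' : ℕ) := Nat.lt_succ_iff.mp a'.isLt
    have h1 := (hmem i ⟨(a : ℕ), lt_of_le_of_lt hab b.isLt⟩).mp
      (mem_intervalSet_inr.mpr ⟨rfl, le_rfl, hab⟩)
    rw [mem_intervalSet_inr] at h1
    simp only [Fin.val_mk] at h1
    obtain ⟨rfl, h1a, h1b⟩ := h1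
    have h2 := (hmem i ⟨(a' : ℕ), lt_of_le_of_lt hab' b'.isLt⟩).mpr
      (mem_intervalSet_inr.mpr ⟨rfl, le_rfl, hab'⟩)
    rw [mem_intervalSet_inr] at h2
    simp only [Fin.val_mk] at h2
    obtain ⟨-, h2a, h2b⟩ := h2
    have h3 := (hmem i ⟨(b : ℕ), b.isLt⟩).mp
      (mem_intervalSet_inr.mpr ⟨rfl, hab, le_rfl⟩)
    rw [mem_intervalSet_inr] at h3
    simp only [Fin.val_mk] at h3
    have h4 := (hmem i ⟨(b' : ℕ), b'.isLt⟩).mpr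
      (mem_intervalSet_inr.mpr ⟨rfl, hab', le_rfl⟩)
    rw [mem_intervalSet_inr] at h4
    simp only [Fin.val_mk] at h4
    have hbb : b = b' := Fin.ext (by omega)
    subst hbb
    have haa : a = a' := Fin.ext (by omega)
    subst haa
    rfl
  | Sum.inl ⟨i, b, a⟩, Sum.inr ⟨C, c⟩ =>
    exfalso
    simp only [codeFun] at hval
    obtain ⟨x0, hx0⟩ := C.2.1
    have : (Sum.inl x0 : Fin g ⊕ Σ i : Fin k, Fin (len i)) ∈ intervalSet i (a : ℕ) (b : ℕ) := by
      rw [hval]; exact mem_arcSet_inl.mpr hx0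
    exact mem_intervalSet_inl.mp this
  | Sum.inr ⟨C, c⟩, Sum.inl ⟨i, b, a⟩ =>
    exfalso
    simp only [codeFun] at hval
    obtain ⟨x0, hx0⟩ := C.2.1
    have : (Sum.inl x0 : Fin g ⊕ Σ i : Fin k, Fin (len i)) ∈ intervalSet i (a : ℕ) (b : ℕ) := by
      rw [← hval]; exact mem_arcSet_inl.mpr hx0
    exact mem_intervalSet_inl.mp this
  | Sum.inr ⟨C, c⟩, Sum.inr ⟨C', c'⟩ =>
    simp only [codeFun] at hval
    have hCC : C.1 = C'.1 := by
      ext x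
      rw [← mem_arcSet_inl (len := len) (c := fun i => ((c i : ℕ))),
        ← mem_arcSet_inl (len := len) (c := fun i => ((c' i : ℕ))), hval]
    have hCC2 : C = C' := Subtype.ext hCC
    subst hCC2
    have hcc : c = c' := by
      funext i
      have hle : (c i : ℕ) ≤ len i ∧ (c' i : ℕ) ≤ len i := by
        constructor <;> · have := (c i).isLt; have := (c' i).isLt; split_ifs at * <;> omega
      have hiff : ∀ p : ℕ, p < len i → ((p < (c i : ℕ)) ↔ (p < (c' i : ℕ))) := by
        intro p hp
        rw [← mem_arcSet_inr (c := fun i => ((c i : ℕ))) (p := ⟨p, hp⟩),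
          ← mem_arcSet_inr (c := fun i => ((c' i : ℕ))) (p := ⟨p, hp⟩), hval]
      apply Fin.ext
      rcases Nat.lt_trichotomy (c i : ℕ) (c' i : ℕ) with h | h | h
      · have := (hiff (c i : ℕ) (by omega)).mpr (by omega); omega
      · exact h
      · have := (hiff (c' i : ℕ) (by omega)).mp (by omega); omega
    subst hcc
    rfl

lemma codeFun_surjective : Function.Surjective (codeFun att len) := by
  rintro ⟨s, hs⟩
  rcases (conn_iff s).mp hs with ⟨i, a, b, hab, hblt, rfl⟩ | ⟨C, c, hC, hlen, hatt, rfl⟩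
  · exact ⟨Sum.inl ⟨i, ⟨b, hblt⟩, ⟨a, Nat.lt_succ_of_le hab⟩⟩, Subtype.ext rfl⟩
  · refine ⟨Sum.inr ⟨⟨C, hC⟩, fun i => ⟨c i, ?_⟩⟩, Subtype.ext rfl⟩
    split_ifs with h
    · exact Nat.lt_succ_of_le (hlen i)
    · have hno : ¬ 0 < c i := fun hp => h (hatt i hp)
      omega

open Classical in
theorem numCIS_formula :
    numCIS (cyclePendants g k att len) =
      (∑ i : Fin k, ∑ b ∈ Finset.range (len i), (b + 1)) +
      ∑ C ∈ Finset.univ.filter (goodC (g := g)),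
        ∏ i : Fin k, (if att i ∈ C then len i + 1 else 1) := by
  have hbij : Function.Bijective (codeFun att len) :=
    ⟨codeFun_injective att len, codeFun_surjective att len⟩
  rw [numCIS, Nat.card_congr (Equiv.ofBijective _ hbij).symm, Nat.card_sum]
  congr 1
  · rw [Nat.card_eq_fintype_card, Fintype.card_sigma]
    congr 1
    funext i
    rw [Fintype.card_sigma]
    simp only [Fintype.card_fin]
    exact Fin.sum_univ_eq_sum_range (fun b => b + 1) (len i)
  · rw [Nat.card_eq_fintype_card, Fintype.card_sigma]
    rw [Finset.sum_subtype (p := goodC (g := g)) (Finset.univ.filter (goodC (g := g)))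
      (by simp) (fun C => ∏ i : Fin k, (if att i ∈ C then len i + 1 else 1))]
    congr 1
    funext C
    rw [Fintype.card_pi]
    congr 1
    funext i
    split_ifs <;> simp

end Count
section Eval
lemma filter3 : (Finset.univ.filter (goodC (g := 3))) =
    {{0}, {1}, {2}, {0,1}, {0,2}, {1,2}, {0,1,2}} := by decide

lemma filter4 : (Finset.univ.filter (goodC (g := 4))) =
    {{0}, {1}, {2}, {3}, {0,1}, {0,3}, {1,2}, {2,3},
     {0,1,2}, {0,1,3}, {0,2,3}, {1,2,3}, {0,1,2,3}} := by decide
end Eval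


/-- For `n = 5m - 2` with `m > 1`, comparing `Δ_{n,n-5}` (triangle with five pendant
paths, each of `m-1` new vertices: three at `v2`, one at `v1`, one at `v0`) and
`Ω_{n,n-5}` (4-cycle with pendant paths of `m-2, m-1, m-1, m-1` new vertices at
`v0, v1, v2, v3` and an additional pendant path of `m-1` new vertices at `v2`):
`N(Ω) - N(Δ) = m(m - 2)`. -/
theorem numCIS_Omega_sub_Delta_5m2 (m : ℕ) (hm : 1 < m) :
    numCIS (cyclePendants 4 5 ![0, 1, 2, 3, 2] ![m - 2, m - 1, m - 1, m - 1, m - 1]) =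
      numCIS (cyclePendants 3 5 ![2, 2, 2, 1, 0] ![m - 1, m - 1, m - 1, m - 1, m - 1]) +
        m * (m - 2) := by
  obtain ⟨t, rfl⟩ : ∃ t, m = t + 2 := ⟨m - 2, by omega⟩
  have e1 : t + 2 - 1 = t + 1 := rfl
  have e2 : t + 2 - 2 = t := rfl
  rw [numCIS_formula, numCIS_formula, filter3, filter4, e1, e2]
  simp (config := { decide := true }) only [Fin.sum_univ_five, Fin.prod_univ_five,
    Matrix.cons_val_zero, Matrix.cons_val_one, Matrix.head_cons,
    Matrix.cons_val_two, Matrix.tail_cons, Matrix.cons_val_three, Matrix.cons_val_four,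
    Matrix.head_fin_const, Finset.sum_insert, Finset.sum_singleton,
    Finset.mem_insert, Finset.mem_singleton, if_true, if_false]
  rw [Finset.sum_range_succ]
  set S := ∑ b ∈ Finset.range t, (b + 1) with hS
  ring_nf
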